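/- Let X≥0 have distribution function F with continuous density f, let α>0 with m(α)=E[X^α]∈(0,∞), and let R(x)=2/(1-G(x))-(1-F(x))/(1-G(x))^2 with G the Williamson transform of F. If additionally x^{α+1}f(x)→0 as x→∞, then x^{1-α}R'(x) → 2α/m(α) as x→∞. -/

import Mathlib

open MeasureTheory Filter Topology Real Set

theorem stmt19 (α : ℝ) (hα : 0 < α) (f F G R : ℝ → ℝ)
    (hf_cont : Continuous f) (hf_nn : ∀ x, 0 ≤ f x)
    (hf0 : ∀ x ≤ (0:ℝ), f x = 0)
    (hFdef : ∀ x, F x = ∫ t in (0:ℝ)..x, f t)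
    (hFlim : Tendsto F atTop (𝓝 1))
    (hint : IntegrableOn (fun t => t ^ α * f t) (Set.Ioi 0))
    (hm : 0 < ∫ t in Set.Ioi (0:ℝ), t ^ α * f t)
    (hG : ∀ x > 0, G x = ∫ t in (0:ℝ)..x, (1 - (t / x) ^ α) * f t)
    (hR : ∀ x > 0, R x = 2 / (1 - G x) - (1 - F x) / (1 - G x) ^ 2)
    (hft : Tendsto (fun x => x ^ (α + 1) * f x) atTop (𝓝 0)) :
    Tendsto (fun x => x ^ (1 - α) * deriv R x) atTop
      (𝓝 (2 * α / ∫ t in Set.Ioi (0:ℝ), t ^ α * f t)) := by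
  set m := ∫ t in Set.Ioi (0:ℝ), t ^ α * f t with hm_def
  set H : ℝ → ℝ := fun x => ∫ t in (0:ℝ)..x, t ^ α * f t with hH_def
  have hg_cont : Continuous (fun t : ℝ => t ^ α * f t) :=
    (Real.continuous_rpow_const hα.le).mul hf_cont
  -- H tends to m
  have hH_tend : Tendsto H atTop (𝓝 m) :=
    intervalIntegral_tendsto_integral_Ioi 0 hint tendsto_id
  -- f is integrable on Ioi 0
  have hFint : Tendsto (fun x => ∫ t in (0:ℝ)..x, f t) atTop (𝓝 1) :=
    hFlim.congr fun x => hFdef x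
  have hf_int : IntegrableOn f (Set.Ioi (0:ℝ)) := by
    refine integrableOn_Ioi_of_intervalIntegral_norm_tendsto 1 0
      (fun i => (hf_cont.integrableOn_Icc).mono_set Set.Ioc_subset_Icc_self)
      tendsto_id ?_
    have : (fun i : ℝ => ∫ x in (0:ℝ)..(id i), ‖f x‖) = fun i : ℝ => ∫ t in (0:ℝ)..i, f t := by
      funext i
      simp only [id]
      congr 1
      funext t
      exact Real.norm_of_nonneg (hf_nn t)
    rw [this]
    exact hFint
  have h1 : ∫ t in Set.Ioi (0:ℝ), f t = 1 :=
    tendsto_nhds_unique (intervalIntegral_tendsto_integral_Ioi 0 hf_int tendsto_id) hFint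
  -- tail representation of 1 - F
  have htail : ∀ x : ℝ, 0 < x → 1 - F x = ∫ t in Set.Ioi x, f t := by
    intro x hx
    have hsplit : ∫ t in Set.Ioi (0:ℝ), f t
        = (∫ t in Set.Ioc 0 x, f t) + ∫ t in Set.Ioi x, f t := by
      rw [← setIntegral_union (Set.Ioc_disjoint_Ioi le_rfl) measurableSet_Ioi
        (hf_int.mono_set Set.Ioc_subset_Ioi_self) (hf_int.mono_set (Set.Ioi_subset_Ioi hx.le)),
        Set.Ioc_union_Ioi_eq_Ioi hx.le]
    have hFx : F x = ∫ t in Set.Ioc 0 x, f t := by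
      rw [hFdef x, intervalIntegral.integral_of_le hx.le]
    rw [h1] at hsplit
    rw [hFx]; linarith
  -- tail of g
  have htailg : ∀ x : ℝ, 0 < x → (∫ t in Set.Ioi x, t ^ α * f t) = m - H x := by
    intro x hx
    have hsplit : m = (∫ t in Set.Ioc 0 x, t ^ α * f t) + ∫ t in Set.Ioi x, t ^ α * f t := by
      rw [hm_def, ← setIntegral_union (Set.Ioc_disjoint_Ioi le_rfl) measurableSet_Ioi
        (hint.mono_set Set.Ioc_subset_Ioi_self) (hint.mono_set (Set.Ioi_subset_Ioi hx.le)),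
        Set.Ioc_union_Ioi_eq_Ioi hx.le]
    have hHx : H x = ∫ t in Set.Ioc 0 x, t ^ α * f t :=
      intervalIntegral.integral_of_le hx.le
    rw [hHx]; linarith
  -- B := x^α (1-F x) → 0
  have hB : Tendsto (fun x => x ^ α * (1 - F x)) atTop (𝓝 0) := by
    apply squeeze_zero' (g := fun x => m - H x)
    · filter_upwards [eventually_gt_atTop (0:ℝ)] with x hx
      have h2 : 0 ≤ ∫ t in Set.Ioi x, f t :=
        setIntegral_nonneg measurableSet_Ioi fun t _ => hf_nn t
      have := Real.rpow_nonneg hx.le α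
      rw [htail x hx]
      positivity
    · filter_upwards [eventually_gt_atTop (0:ℝ)] with x hx
      rw [htail x hx, ← htailg x hx]
      calc x ^ α * ∫ t in Set.Ioi x, f t = ∫ t in Set.Ioi x, x ^ α * f t := by
            rw [← integral_const_mul]
        _ ≤ ∫ t in Set.Ioi x, t ^ α * f t := by
            refine setIntegral_mono_on
              ((hf_int.mono_set (Set.Ioi_subset_Ioi hx.le)).const_mul _)
              (hint.mono_set (Set.Ioi_subset_Ioi hx.le)) measurableSet_Ioi ?_
            intro t ht
            exact mul_le_mul_of_nonneg_right
              (Real.rpow_le_rpow hx.le (le_of_lt ht) hα.le) (hf_nn t)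
    · simpa using hH_tend.const_sub m
  -- representation of 1 - G
  have hGrep : ∀ x : ℝ, 0 < x → 1 - G x = (1 - F x) + x ^ (-α) * H x := by
    intro x hx
    have hxα : (0:ℝ) < x ^ α := Real.rpow_pos_of_pos hx α
    have hcongr : ∫ t in (0:ℝ)..x, (1 - (t / x) ^ α) * f t
        = ∫ t in (0:ℝ)..x, (f t - x ^ (-α) * (t ^ α * f t)) := by
      refine intervalIntegral.integral_congr ?_
      intro t ht
      rw [Set.uIcc_of_le hx.le] at ht
      have ht0 : 0 ≤ t := ht.1
      show (1 - (t / x) ^ α) * f t = f t - x ^ (-α) * (t ^ α * f t)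
      rw [Real.div_rpow ht0 hx.le, Real.rpow_neg hx.le]
      field_simp
    have hsub : ∫ t in (0:ℝ)..x, (f t - x ^ (-α) * (t ^ α * f t))
        = (∫ t in (0:ℝ)..x, f t) - ∫ t in (0:ℝ)..x, x ^ (-α) * (t ^ α * f t) :=
      intervalIntegral.integral_sub (hf_cont.intervalIntegrable _ _)
        ((continuous_const.mul hg_cont).intervalIntegrable _ _)
    rw [hG x hx, hcongr, hsub, intervalIntegral.integral_const_mul, ← hFdef x]
    ring
  -- A := x^α (1-G x) → m
  have hA : Tendsto (fun x => x ^ α * (1 - G x)) atTop (𝓝 m) := by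
    have hev : ∀ᶠ x in atTop, x ^ α * (1 - F x) + H x = x ^ α * (1 - G x) := by
      filter_upwards [eventually_gt_atTop (0:ℝ)] with x hx
      rw [hGrep x hx, mul_add, ← mul_assoc, ← Real.rpow_add hx]
      simp
    have := hB.add hH_tend
    rw [zero_add] at this
    exact this.congr' hev
  -- eventually 1 - G x > 0
  have hpos : ∀ᶠ x in atTop, 0 < 1 - G x := by
    filter_upwards [hA.eventually (eventually_gt_nhds hm), eventually_gt_atTop (0:ℝ)]
      with x hgt hx
    have hxα : (0:ℝ) < x ^ α := Real.rpow_pos_of_pos hx α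
    nlinarith
  have hm_ne : m ≠ 0 := hm.ne'
  -- the limit function
  set φ : ℝ → ℝ := fun x =>
    (2 * α * H x + x ^ (α + 1) * f x) / (x ^ α * (1 - G x)) ^ 2
      - 2 * α * (x ^ α * (1 - F x)) * H x / (x ^ α * (1 - G x)) ^ 3 with hφ_def
  have hφ_tend : Tendsto φ atTop (𝓝 (2 * α / m)) := by
    have hT : Tendsto φ atTop
        (𝓝 ((2 * α * m + 0) / m ^ 2 - 2 * α * 0 * m / m ^ 3)) := by
      refine Tendsto.sub
        (Tendsto.div ((tendsto_const_nhds.mul hH_tend).add hft) (hA.pow 2)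
          (pow_ne_zero _ hm_ne))
        (Tendsto.div ((tendsto_const_nhds.mul hB).mul hH_tend) (hA.pow 3)
          (pow_ne_zero _ hm_ne))
    convert hT using 2
    field_simp
    ring
  -- eventually the function under study equals φ
  have key : ∀ᶠ x in atTop, x ^ (1 - α) * deriv R x = φ x := by
    filter_upwards [eventually_gt_atTop (0:ℝ), hpos] with x hx hu
    have hxα : (0:ℝ) < x ^ α := Real.rpow_pos_of_pos hx α
    have hu' : (1 : ℝ) - G x ≠ 0 := ne_of_gt hu
    -- derivative of H
    have hHd : HasDerivAt H (x ^ α * f x) x :=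
      intervalIntegral.integral_hasDerivAt_right (hg_cont.intervalIntegrable _ _)
        (hg_cont.stronglyMeasurable.stronglyMeasurableAtFilter) hg_cont.continuousAt
    -- derivative of F
    have hFd : HasDerivAt F (f x) x := by
      have : F = fun y => ∫ t in (0:ℝ)..y, f t := funext hFdef
      rw [this]
      exact intervalIntegral.integral_hasDerivAt_right (hf_cont.intervalIntegrable _ _)
        (hf_cont.stronglyMeasurable.stronglyMeasurableAtFilter) hf_cont.continuousAt
    -- derivative of G
    have hGd : HasDerivAt G
        (f x - ((-α * x ^ (-α - 1)) * H x + x ^ (-α) * (x ^ α * f x))) x := by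
      have hev : G =ᶠ[𝓝 x] fun y => F y - y ^ (-α) * H y := by
        filter_upwards [Ioi_mem_nhds hx] with y hy
        have := hGrep y hy
        linarith
      have hpow : HasDerivAt (fun y : ℝ => y ^ (-α)) (-α * x ^ (-α - 1)) x :=
        Real.hasDerivAt_rpow_const (Or.inl hx.ne')
      exact (hFd.sub (hpow.mul hHd)).congr_of_eventuallyEq hev
    set Gd := f x - ((-α * x ^ (-α - 1)) * H x + x ^ (-α) * (x ^ α * f x)) with hGd_def
    -- derivative of 1 - G
    have h1G : HasDerivAt (fun y => 1 - G y) (-Gd) x := hGd.const_sub 1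
    -- derivative of R
    have hRd : HasDerivAt R
        ((0 * (1 - G x) - 2 * (-Gd)) / (1 - G x) ^ 2
          - (((-f x) * (1 - G x) ^ 2 - (1 - F x) * ((2:ℕ) * (1 - G x) ^ 1 * (-Gd)))
              / ((1 - G x) ^ 2) ^ 2)) x := by
      have hev : R =ᶠ[𝓝 x] fun y => 2 / (1 - G y) - (1 - F y) / (1 - G y) ^ 2 := by
        filter_upwards [Ioi_mem_nhds hx] with y hy
        exact hR y hy
      have hterm1 : HasDerivAt (fun y => 2 / (1 - G y))
          ((0 * (1 - G x) - 2 * (-Gd)) / (1 - G x) ^ 2) x :=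
        (hasDerivAt_const x (2:ℝ)).div h1G hu'
      have hterm2 : HasDerivAt (fun y => (1 - F y) / (1 - G y) ^ 2)
          (((-f x) * (1 - G x) ^ 2 - (1 - F x) * ((2:ℕ) * (1 - G x) ^ 1 * (-Gd)))
            / ((1 - G x) ^ 2) ^ 2) x :=
        (hFd.const_sub 1).div (h1G.pow 2) (pow_ne_zero 2 hu')
      exact (hterm1.sub hterm2).congr_of_eventuallyEq hev
    rw [hRd.deriv]
    -- now pure algebra
    have e1 : x ^ (-α) = (x ^ α)⁻¹ := Real.rpow_neg hx.le α
    have e2 : x ^ (-α - 1) = (x ^ α)⁻¹ * x⁻¹ := by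
      rw [show -α - 1 = -α + (-1) by ring, Real.rpow_add hx, e1, Real.rpow_neg_one]
    have e3 : x ^ (1 - α) = x * (x ^ α)⁻¹ := by
      rw [show 1 - α = 1 + (-α) by ring, Real.rpow_add hx, Real.rpow_one, e1]
    have e4 : x ^ (α + 1) = x ^ α * x := by
      rw [Real.rpow_add hx, Real.rpow_one]
    rw [hφ_def]
    simp only [hGd_def, e1, e2, e3, e4]
    have hx0 : x ≠ 0 := hx.ne'
    have hxα0 : x ^ α ≠ 0 := hxα.ne'
    field_simp
    ring
  exact hφ_tend.congr' (by filter_upwards [key] with x h using h.symm)
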